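/- In the time-dependent variational setting described in the context, let m₀ be a Borel probability measure on ℝⁿ whose support is contained in K₀, and let φ : [0,T]×ℝⁿ → ℝⁿ be a map such that for each x ∈ K₀ the curve s ↦ φ(s,x) is a minimizer from (0,x), and such that for each t ∈ [0,T] the map x ↦ φ(t,x) is Borel measurable. Then there exists a constant R₁ > 0, depending only on n, the Tonelli constants of L, C_F, R₀, δ₀, c₀, the Lipschitz constant of u^f, and sup_{K₀}|u^f| (in particular independent of T and of the particular coupling c), such that for every t ∈ [0,T] the pushforward measure φ(t,·)♯m₀ is supported in the closed ball B̄_{R₁}. -/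

import Mathlib

noncomputable section

open MeasureTheory Metric Set
open scoped RealInnerProductSpace NNReal

abbrev Euc (n : ℕ) := EuclideanSpace ℝ (Fin n)

/-- A strict Tonelli Lagrangian with constants `C₁ C₂ C₃`:
(a) uniform convexity/boundedness of the second derivative in `v`;
(b) bound on the mixed second derivative `D²_{vx}L`;
(c) bound at `v = 0`. -/
def IsStrictTonelli {n : ℕ} (L : Euc n → Euc n → ℝ) (C₁ C₂ C₃ : ℝ) : Prop :=
  ContDiff ℝ 2 (Function.uncurry L) ∧
  (∀ x v w : Euc n,
      (1 / C₁) * ‖w‖ ^ 2 ≤ iteratedFDeriv ℝ 2 (L x) v ![w, w] ∧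
      iteratedFDeriv ℝ 2 (L x) v ![w, w] ≤ C₁ * ‖w‖ ^ 2) ∧
  (∀ x v : Euc n, ‖fderiv ℝ (fun y => fderiv ℝ (L y) v) x‖ ≤ C₂ * (1 + ‖v‖)) ∧
  (∀ x : Euc n, |L x 0| + ‖fderiv ℝ (fun y => L y 0) x‖ + ‖fderiv ℝ (L x) 0‖ ≤ C₃)

/-- The action `J_t(ξ) = ∫_t^T (L(ξ(s), ξ'(s)) + c(s, ξ(s))) ds + u^f(ξ(T))` of a
(Lipschitz) curve `ξ`, the derivative being taken almost everywhere. -/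
def action {n : ℕ} (L : Euc n → Euc n → ℝ) (c : ℝ → Euc n → ℝ) (uf : Euc n → ℝ)
    (t T : ℝ) (ξ : ℝ → Euc n) : ℝ :=
  (∫ s in t..T, (L (ξ s) (deriv ξ s) + c s (ξ s))) + uf (ξ T)

/-- `ξ` is a minimizer from `(t,x)`: it is Lipschitz, starts at `x` at time `t`, and its
action on `[t,T]` is no greater than that of any Lipschitz curve starting at `x` at time
`t`. -/
def IsMinimizer {n : ℕ} (L : Euc n → Euc n → ℝ) (c : ℝ → Euc n → ℝ) (uf : Euc n → ℝ)
    (t T : ℝ) (x : Euc n) (ξ : ℝ → Euc n) : Prop :=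
  (∃ K : ℝ≥0, LipschitzWith K ξ) ∧ ξ t = x ∧
  ∀ η : ℝ → Euc n, (∃ K : ℝ≥0, LipschitzWith K η) → η t = x →
    action L c uf t T ξ ≤ action L c uf t T η

/-- The uniform well condition: the point `xT ∈ K₀` minimizes `x ↦ L(x,0) + c(s,x)` over
`K₀` at every time `s ∈ [0,T]`, and beats every point outside `K₀` by at least `δ₀`. -/
def WellCondition {n : ℕ} (L : Euc n → Euc n → ℝ) (c : ℝ → Euc n → ℝ)
    (K₀ : Set (Euc n)) (δ₀ T : ℝ) (xT : Euc n) : Prop :=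
  xT ∈ K₀ ∧ ∀ s ∈ Set.Icc (0 : ℝ) T,
    (∀ y ∈ K₀, L xT 0 + c s xT ≤ L y 0 + c s y) ∧
    (∀ y ∉ K₀, L xT 0 + c s xT + δ₀ ≤ L y 0 + c s y)

open Filter intervalIntegral
open scoped Topology Interval

lemma my_even_fderiv_zero {n : ℕ} {g : Euc n → ℝ} (hg : Differentiable ℝ g)
    (he : ∀ v, g v = g (-v)) : fderiv ℝ g 0 = 0 := by
  have hdneg : DifferentiableAt ℝ (fun v : Euc n => -v) 0 := differentiable_id.neg.differentiableAt
  have key2 : fderiv ℝ (g ∘ fun v : Euc n => -v) 0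
      = (fderiv ℝ g (-0)).comp (fderiv ℝ (fun v : Euc n => -v) 0) :=
    fderiv_comp 0 (hg.differentiableAt) hdneg
  have key : fderiv ℝ g 0 = fderiv ℝ (g ∘ fun v : Euc n => -v) 0 := by
    congr 1
    exact funext he
  rw [key2] at key
  have hneg : fderiv ℝ (fun v : Euc n => -v) (0 : Euc n) = -(ContinuousLinearMap.id ℝ (Euc n)) := by
    have h3 : fderiv ℝ (fun v : Euc n => -(id v)) (0:Euc n) = -(fderiv ℝ (id : Euc n → Euc n) 0) :=
      fderiv_neg ..
    simpa [fderiv_id'] using h3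
  rw [neg_zero, hneg] at key
  ext w
  have := congrFun (congrArg (fun (T : Euc n →L[ℝ] ℝ) => (T : Euc n → ℝ)) key) w
  simp only [ContinuousLinearMap.comp_apply, ContinuousLinearMap.neg_apply,
    ContinuousLinearMap.coe_id', id_eq, ContinuousLinearMap.zero_apply, map_neg] at this ⊢
  linarith
lemma my_taylor {n : ℕ} {g : Euc n → ℝ} (hg : ContDiff ℝ 2 g) {m M : ℝ}
    (hlo : ∀ u w : Euc n, m * ‖w‖ ^ 2 ≤ iteratedFDeriv ℝ 2 g u ![w, w])
    (hhi : ∀ u w : Euc n, iteratedFDeriv ℝ 2 g u ![w, w] ≤ M * ‖w‖ ^ 2)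
    (h0 : fderiv ℝ g 0 = 0) (v : Euc n) :
    g 0 + (m / 2) * ‖v‖ ^ 2 ≤ g v ∧ g v ≤ g 0 + (M / 2) * ‖v‖ ^ 2 := by
  have hgd : Differentiable ℝ g := hg.differentiable two_ne_zero
  have hg' : ContDiff ℝ 1 (fun y => fderiv ℝ g y) := hg.fderiv_right (by norm_num)
  set p : ℝ → ℝ := fun t => fderiv ℝ g (t • v) v with hp_def
  have line : ∀ t : ℝ, HasDerivAt (fun u : ℝ => u • v) v t := fun t => by
    simpa using (hasDerivAt_id t).smul_const v
  have hq : ∀ t : ℝ, HasDerivAt (fun u : ℝ => g (u • v)) (p t) t := fun t =>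
    (hgd.differentiableAt.hasFDerivAt.comp_hasDerivAt t (line t))
  have hp : ∀ t : ℝ, HasDerivAt p (iteratedFDeriv ℝ 2 g (t • v) ![v, v]) t := by
    intro t
    have h1 : HasFDerivAt (fun y => fderiv ℝ g y) (fderiv ℝ (fun y => fderiv ℝ g y) (t • v)) (t • v) :=
      ((hg'.differentiable one_ne_zero).differentiableAt).hasFDerivAt
    have h2 : HasDerivAt (fun u : ℝ => fderiv ℝ g (u • v)) (fderiv ℝ (fun y => fderiv ℝ g y) (t • v) v) t :=
      h1.comp_hasDerivAt t (line t)
    have h3 := h2.clm_apply (hasDerivAt_const t v)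
    have h4 : iteratedFDeriv ℝ 2 g (t • v) ![v, v]
        = fderiv ℝ (fun y => fderiv ℝ g y) (t • v) v v := by
      rw [iteratedFDeriv_two_apply]
      simp
    rw [h4]
    simpa using h3
  have hsmono : ∀ (a : ℝ), (∀ u w : Euc n, a * ‖w‖ ^ 2 ≤ iteratedFDeriv ℝ 2 g u ![w, w]) →
      Monotone (fun t => p t - a * ‖v‖ ^ 2 * t) := by
    intro a ha
    have hs' : ∀ t : ℝ, HasDerivAt (fun t => p t - a * ‖v‖ ^ 2 * t)
        (iteratedFDeriv ℝ 2 g (t • v) ![v, v] - a * ‖v‖ ^ 2) t := fun t => by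
      have h := (hp t).sub ((hasDerivAt_id t).const_mul (a * ‖v‖ ^ 2))
      simp only [id_eq, mul_one] at h
      exact h
    exact monotone_of_deriv_nonneg (fun t => (hs' t).differentiableAt)
      (fun t => by rw [(hs' t).deriv]; linarith [ha (t • v) v])
  have hp0 : p 0 = 0 := by simp [hp_def, h0]
  have key : ∀ (a : ℝ), (∀ t : ℝ, 0 ≤ t → a * t ≤ p t) →
      a / 2 ≤ g v - g 0 := by
    intro a ha
    set r : ℝ → ℝ := fun t => g (t • v) - (a / 2) * t ^ 2 with hr_def
    have hr : ∀ t : ℝ, HasDerivAt r (p t - a * t) t := fun t => by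
      have := (hq t).sub ((hasDerivAt_pow 2 t).const_mul (a / 2))
      exact this.congr_deriv (by ring)
    have hrm : MonotoneOn r (Ici (0 : ℝ)) := by
      apply monotoneOn_of_deriv_nonneg (convex_Ici 0)
        (fun t _ => ((hr t).differentiableAt.continuousAt).continuousWithinAt)
        (fun t _ => (hr t).differentiableAt.differentiableWithinAt)
      intro t ht
      rw [(hr t).deriv]
      have : (0:ℝ) < t := by simpa [interior_Ici] using ht
      linarith [ha t this.le]
    have := hrm (self_mem_Ici) (mem_Ici.2 zero_le_one) zero_le_one
    simp only [hr_def, zero_smul, one_smul, one_pow] at this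
    linarith
  constructor
  · have hmono := hsmono m hlo
    have ha : ∀ t : ℝ, 0 ≤ t → (m * ‖v‖ ^ 2) * t ≤ p t := by
      intro t ht
      have h1 : p 0 - m * ‖v‖ ^ 2 * 0 ≤ p t - m * ‖v‖ ^ 2 * t := hmono ht
      simp only [hp0, mul_zero, sub_zero] at h1
      linarith
    have := key (m * ‖v‖ ^ 2) ha
    linarith
  · -- upper bound: apply lower-bound machinery to -g with constant -M
    have hmono : Monotone (fun t => (M * ‖v‖ ^ 2) * t - p t) := by
      have hs' : ∀ t : ℝ, HasDerivAt (fun t => (M * ‖v‖ ^ 2) * t - p t)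
          (M * ‖v‖ ^ 2 - iteratedFDeriv ℝ 2 g (t • v) ![v, v]) t := fun t => by
        have h := ((hasDerivAt_id t).const_mul (M * ‖v‖ ^ 2)).sub (hp t)
        simp only [id_eq, mul_one] at h
        exact h
      exact monotone_of_deriv_nonneg (fun t => (hs' t).differentiableAt)
        (fun t => by rw [(hs' t).deriv]; linarith [hhi (t • v) v])
    set r : ℝ → ℝ := fun t => (M / 2) * ‖v‖ ^ 2 * t ^ 2 - g (t • v) with hr_def
    have hr : ∀ t : ℝ, HasDerivAt r ((M * ‖v‖ ^ 2) * t - p t) t := fun t => by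
      have := ((hasDerivAt_pow 2 t).const_mul ((M / 2) * ‖v‖ ^ 2)).sub (hq t)
      exact this.congr_deriv (by ring)
    have hrm : MonotoneOn r (Ici (0 : ℝ)) := by
      apply monotoneOn_of_deriv_nonneg (convex_Ici 0)
        (fun t _ => ((hr t).differentiableAt.continuousAt).continuousWithinAt)
        (fun t _ => (hr t).differentiableAt.differentiableWithinAt)
      intro t ht
      rw [(hr t).deriv]
      have ht' : (0:ℝ) < t := by simpa [interior_Ici] using ht
      have h1 : (M * ‖v‖ ^ 2) * 0 - p 0 ≤ (M * ‖v‖ ^ 2) * t - p t := hmono ht'.le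
      simp only [hp0, mul_zero, sub_zero] at h1
      linarith
    have := hrm (self_mem_Ici) (mem_Ici.2 zero_le_one) zero_le_one
    simp only [hr_def, zero_smul, one_smul, one_pow] at this
    linarith
lemma my_norm_deriv_le {n : ℕ} {ξ : ℝ → Euc n} {K : ℝ≥0} (hξ : LipschitzWith K ξ)
    (s : ℝ) : ‖deriv ξ s‖ ≤ K := by
  have h1 : ‖fderiv ℝ ξ s‖ ≤ K := norm_fderiv_le_of_lipschitz ℝ hξ
  calc ‖deriv ξ s‖ = ‖fderiv ℝ ξ s 1‖ := by rw [← fderiv_apply_one_eq_deriv]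
    _ ≤ ‖fderiv ℝ ξ s‖ * ‖(1:ℝ)‖ := (fderiv ℝ ξ s).le_opNorm 1
    _ ≤ K := by simpa using h1

lemma my_lip_ftc_le {n : ℕ} {ξ : ℝ → Euc n} {K : ℝ≥0} (hξ : LipschitzWith K ξ)
    {a b : ℝ} (hab : a ≤ b) : ‖ξ b - ξ a‖ ≤ ∫ s in a..b, ‖deriv ξ s‖ := by
  have hcont : Continuous ξ := hξ.continuous
  have hint : ∀ (u w : ℝ), IntervalIntegrable ξ volume u w := fun u w =>
    hcont.intervalIntegrable u w
  have step1 : ∀ h : ℝ, 0 < h →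
      ‖ξ b - ξ a‖ ≤ (∫ s in a..b, h⁻¹ * ‖ξ (s + h) - ξ s‖) + 2 * K * h := by
    intro h hh
    have hintsh : IntervalIntegrable (fun s => ξ (s + h)) volume a b :=
      (hcont.comp (continuous_id.add continuous_const)).intervalIntegrable a b
    have e2 : (∫ s in a..b, (ξ (s + h) - ξ s)) =
        (∫ s in b..b+h, ξ s) - ∫ s in a..a+h, ξ s := by
      rw [integral_sub hintsh (hint a b), integral_comp_add_right ξ h]
      have h1 : (∫ s in a..a+h, ξ s) + (∫ s in a+h..b+h, ξ s) = ∫ s in a..b+h, ξ s :=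
        integral_add_adjacent_intervals (hint _ _) (hint _ _)
      have h2 : (∫ s in a..b, ξ s) + (∫ s in b..b+h, ξ s) = ∫ s in a..b+h, ξ s :=
        integral_add_adjacent_intervals (hint _ _) (hint _ _)
      have h3 := h1.trans h2.symm
      rw [sub_eq_sub_iff_add_eq_add]
      calc (∫ s in a+h..b+h, ξ s) + ∫ s in a..a+h, ξ s
          = (∫ s in a..a+h, ξ s) + ∫ s in a+h..b+h, ξ s := add_comm _ _
        _ = (∫ s in a..b, ξ s) + ∫ s in b..b+h, ξ s := h3
        _ = (∫ s in b..b+h, ξ s) + ∫ s in a..b, ξ s := add_comm _ _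
    have near : ∀ u : ℝ, ‖(∫ s in u..u+h, ξ s) - h • ξ u‖ ≤ K * h * h := by
      intro u
      have e3 : (∫ s in u..u+h, ξ s) - h • ξ u = ∫ s in u..u+h, (ξ s - ξ u) := by
        rw [integral_sub (hint _ _) intervalIntegrable_const,
          intervalIntegral.integral_const, add_sub_cancel_left]
      rw [e3]
      have hb : ∀ s ∈ Ι u (u+h), ‖ξ s - ξ u‖ ≤ K * h := by
        intro s hs
        rw [uIoc_of_le (by linarith)] at hs
        have := hξ.dist_le_mul s u
        rw [dist_eq_norm] at this
        refine this.trans ?_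
        have h1 : dist s u ≤ h := by
          rw [Real.dist_eq, abs_le]
          constructor <;> [linarith [hs.1]; linarith [hs.2] ]
        exact mul_le_mul_of_nonneg_left h1 K.coe_nonneg
      have := intervalIntegral.norm_integral_le_of_norm_le_const hb
      have habs : |u + h - u| = h := by rw [add_sub_cancel_left, abs_of_pos hh]
      rw [habs] at this
      exact this
    have assemble : h • (ξ b - ξ a) = (∫ s in a..b, (ξ (s + h) - ξ s))
        + ((h • ξ b - ∫ s in b..b+h, ξ s) - (h • ξ a - ∫ s in a..a+h, ξ s)) := by
      rw [smul_sub, e2]; abel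
    have hnorm : h * ‖ξ b - ξ a‖ ≤ (∫ s in a..b, ‖ξ (s + h) - ξ s‖) + 2 * (K * h * h) := by
      have h1 : ‖h • (ξ b - ξ a)‖ = h * ‖ξ b - ξ a‖ := by
        rw [norm_smul, Real.norm_eq_abs, abs_of_pos hh]
      calc h * ‖ξ b - ξ a‖ = ‖h • (ξ b - ξ a)‖ := h1.symm
        _ ≤ ‖∫ s in a..b, (ξ (s + h) - ξ s)‖
            + (‖h • ξ b - ∫ s in b..b+h, ξ s‖ + ‖h • ξ a - ∫ s in a..a+h, ξ s‖) := by
          rw [assemble]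
          exact (norm_add_le _ _).trans (by gcongr; exact norm_sub_le _ _)
        _ ≤ (∫ s in a..b, ‖ξ (s + h) - ξ s‖) + 2 * (K * h * h) := by
          have n1 := near b
          have n2 := near a
          rw [norm_sub_rev] at n1 n2
          have n3 := intervalIntegral.norm_integral_le_integral_norm
            (f := fun s => ξ (s + h) - ξ s) (μ := volume) hab
          linarith
    have hpull : (∫ s in a..b, h⁻¹ * ‖ξ (s + h) - ξ s‖)
        = h⁻¹ * ∫ s in a..b, ‖ξ (s + h) - ξ s‖ := intervalIntegral.integral_const_mul _ _
    rw [hpull]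
    have h2 : ‖ξ b - ξ a‖ = h⁻¹ * (h * ‖ξ b - ξ a‖) := by field_simp
    rw [h2]
    have h3 : h⁻¹ * (h * ‖ξ b - ξ a‖) ≤ h⁻¹ * ((∫ s in a..b, ‖ξ (s + h) - ξ s‖) + 2 * (K * h * h)) :=
      mul_le_mul_of_nonneg_left hnorm (inv_nonneg.2 hh.le)
    have h4 : h⁻¹ * ((∫ s in a..b, ‖ξ (s + h) - ξ s‖) + 2 * ((K:ℝ) * h * h))
        = h⁻¹ * (∫ s in a..b, ‖ξ (s + h) - ξ s‖) + 2 * (K:ℝ) * h := by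
      field_simp
    rw [h4] at h3
    exact h3
  -- Step 2: take the limit along h = 1/(k+1)
  set hk : ℕ → ℝ := fun k => ((k : ℝ) + 1)⁻¹ with hhk_def
  have hhk : ∀ k, 0 < hk k := fun k => by positivity
  set μ' := volume.restrict (Ioc a b) with hμ'
  set F : ℕ → ℝ → ℝ := fun k s => (hk k)⁻¹ * ‖ξ (s + hk k) - ξ s‖ with hF_def
  have hFcont : ∀ k, Continuous (F k) := fun k =>
    continuous_const.mul ((hcont.comp (continuous_id.add continuous_const)).sub hcont).norm
  have hFbound : ∀ k, ∀ᵐ s ∂μ', ‖F k s‖ ≤ (K : ℝ) := by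
    intro k
    refine Eventually.of_forall (fun s => ?_)
    have h1 : ‖ξ (s + hk k) - ξ s‖ ≤ K * hk k := by
      have := hξ.dist_le_mul (s + hk k) s
      rw [dist_eq_norm] at this
      refine this.trans ?_
      rw [Real.dist_eq, add_sub_cancel_left, abs_of_pos (hhk k)]
    have h2 : F k s ≤ (K : ℝ) := by
      rw [hF_def]
      calc (hk k)⁻¹ * ‖ξ (s + hk k) - ξ s‖ ≤ (hk k)⁻¹ * ((K : ℝ) * hk k) :=
            mul_le_mul_of_nonneg_left h1 (inv_nonneg.2 (hhk k).le)
        _ = (K : ℝ) * ((hk k)⁻¹ * hk k) := by ring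
        _ = (K : ℝ) := by rw [inv_mul_cancel₀ (hhk k).ne']; ring
    have h3 : 0 ≤ F k s := mul_nonneg (inv_nonneg.2 (hhk k).le) (norm_nonneg _)
    rwa [Real.norm_eq_abs, abs_of_nonneg h3]
  have hseq : Tendsto hk atTop (𝓝[≠] (0:ℝ)) := by
    refine tendsto_nhdsWithin_of_tendsto_nhds_of_eventually_within _ ?_ ?_
    · have := tendsto_one_div_add_atTop_nhds_zero_nat (𝕜 := ℝ)
      simpa [hhk_def, one_div] using this
    · exact Eventually.of_forall (fun k => (hhk k).ne')
  have hlim : ∀ᵐ s ∂μ', Tendsto (fun k => F k s) atTop (𝓝 ‖deriv ξ s‖) := by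
    refine ae_restrict_of_ae ?_
    filter_upwards [hξ.ae_differentiableAt] with s hs
    have hder : HasDerivAt ξ (deriv ξ s) s := hs.hasDerivAt
    rw [hasDerivAt_iff_tendsto_slope_zero] at hder
    have h1 : Tendsto (fun k => (hk k)⁻¹ • (ξ (s + hk k) - ξ s)) atTop (𝓝 (deriv ξ s)) :=
      hder.comp hseq
    have h2 := h1.norm
    refine h2.congr (fun k => ?_)
    rw [norm_smul, Real.norm_eq_abs, abs_of_pos (inv_pos.2 (hhk k))]
  have hDCT : Tendsto (fun k => ∫ s, F k s ∂μ') atTop (𝓝 (∫ s, ‖deriv ξ s‖ ∂μ')) := by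
    refine tendsto_integral_of_dominated_convergence (fun _ => (K:ℝ))
      (fun k => (hFcont k).aestronglyMeasurable) ?_ hFbound hlim
    rw [hμ']
    exact (integrableOn_const measure_Ioc_lt_top.ne)
  have hK0 : Tendsto (fun k => 2 * (K : ℝ) * hk k) atTop (𝓝 0) := by
    have : Tendsto hk atTop (𝓝 (0:ℝ)) := hseq.mono_right nhdsWithin_le_nhds
    simpa using this.const_mul (2 * (K : ℝ))
  have hsum : Tendsto (fun k => (∫ s, F k s ∂μ') + 2 * (K : ℝ) * hk k) atTop
      (𝓝 ((∫ s, ‖deriv ξ s‖ ∂μ') + 0)) := hDCT.add hK0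
  rw [add_zero] at hsum
  have hfinal : ‖ξ b - ξ a‖ ≤ ∫ s, ‖deriv ξ s‖ ∂μ' := by
    refine ge_of_tendsto hsum (Eventually.of_forall (fun k => ?_))
    have := step1 (hk k) (hhk k)
    rw [intervalIntegral.integral_of_le hab] at this
    exact this
  rwa [intervalIntegral.integral_of_le hab]

set_option maxHeartbeats 2000000
lemma my_key_bound {n : ℕ} (L : Euc n → Euc n → ℝ) (C₁ C₂ C₃ : ℝ)
    (hC₁ : 0 < C₁) (hC₃ : 0 < C₃)
    (hTon : IsStrictTonelli L C₁ C₂ C₃)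
    (hRev : ∀ x v : Euc n, L x v = L x (-v))
    (C_F : ℝ)
    (K₀ : Set (Euc n)) (hK₀c : IsCompact K₀)
    (R₀ : ℝ) (hK₀R₀ : K₀ ⊆ closedBall 0 R₀)
    (δ₀ : ℝ) (hδ₀ : 0 < δ₀)
    (uf : Euc n → ℝ) (Kf : ℝ≥0) (huf : LipschitzWith Kf uf)
    (c₀ : ℝ) (hufge : ∀ x, -c₀ ≤ uf x)
    (y₀ : Euc n) (hy₀ : y₀ ∈ K₀)
    (T : ℝ) (hT : 1 < T) (c : ℝ → Euc n → ℝ)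
    (hccont : ContinuousOn (fun p : ℝ × Euc n => c p.1 p.2) (Set.Icc 0 T ×ˢ Set.univ))
    (hcbd : ∀ s ∈ Set.Icc (0 : ℝ) T, ∀ x, |c s x| ≤ C_F)
    (xT : Euc n) (hwell : WellCondition L c K₀ δ₀ T xT)
    (x : Euc n) (hx : x ∈ K₀) (ξ : ℝ → Euc n)
    (hmin : IsMinimizer L c uf 0 T x ξ)
    (t : ℝ) (ht : t ∈ Set.Icc (0:ℝ) T) :
    ‖ξ t‖ ≤ R₀ + C₁ * (2*C₃ + 2*C₁*R₀^2 + 2*C_F + uf y₀ + 2*(Kf:ℝ)*R₀ + c₀)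
      + (2*C₃ + 2*C₁*R₀^2 + 2*C_F + uf y₀ + 2*(Kf:ℝ)*R₀ + c₀) / (2*δ₀) := by
  set A : ℝ := 2*C₃ + 2*C₁*R₀^2 + 2*C_F + uf y₀ + 2*(Kf:ℝ)*R₀ + c₀ with hA
  obtain ⟨hTc, hTconv, -, hTz⟩ := hTon
  obtain ⟨⟨K, hK⟩, hξ0, hminle⟩ := hmin
  obtain ⟨hxTK, hwells⟩ := hwell
  have hT0 : (0:ℝ) ≤ T := by linarith
  have hcξ : Continuous ξ := hK.continuous
  -- basic facts about L
  have hLycd : ∀ y : Euc n, ContDiff ℝ 2 (L y) := fun y =>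
    hTc.comp ((contDiff_const.prodMk contDiff_id) : ContDiff ℝ 2 (fun v : Euc n => ((y, v) : Euc n × Euc n)))
  have hL0bd : ∀ y, |L y 0| ≤ C₃ := fun y => by
    have h1 := hTz y
    have h2 := norm_nonneg (fderiv ℝ (fun y => L y 0) y)
    have h3 := norm_nonneg (fderiv ℝ (L y) 0)
    linarith
  have hfd0 : ∀ y : Euc n, fderiv ℝ (L y) 0 = 0 := fun y =>
    my_even_fderiv_zero ((hLycd y).differentiable two_ne_zero) (fun v => hRev y v)
  have htay : ∀ y v : Euc n, L y 0 + (1/(2*C₁)) * ‖v‖^2 ≤ L y v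
      ∧ L y v ≤ L y 0 + (C₁/2) * ‖v‖^2 := by
    intro y v
    have h := my_taylor (hLycd y) (m := 1/C₁) (M := C₁)
      (fun u w => (hTconv y u w).1) (fun u w => (hTconv y u w).2) (hfd0 y) v
    have he : (1/C₁)/2 = 1/(2*C₁) := by ring
    exact ⟨by rw [← he]; exact h.1, h.2⟩
  have hwellall : ∀ s ∈ Icc (0:ℝ) T, ∀ y, L xT 0 + c s xT ≤ L y 0 + c s y := by
    intro s hs y
    by_cases hyK : y ∈ K₀
    · exact (hwells s hs).1 y hyK
    · linarith [(hwells s hs).2 y hyK]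
  -- the reference running cost
  set ℓ : ℝ → ℝ := fun s => L xT 0 + c s xT with hℓdef
  have hc_comp : ∀ (γ : ℝ → Euc n), Continuous γ →
      ContinuousOn (fun s => c s (γ s)) (Icc 0 T) := by
    intro γ hγ
    have h1 : ContinuousOn (fun s : ℝ => ((s, γ s) : ℝ × Euc n)) (Icc 0 T) :=
      (continuous_id.prodMk hγ).continuousOn
    exact hccont.comp h1 (fun s hs => ⟨hs, mem_univ _⟩)
  have hℓcont : ContinuousOn ℓ (Icc 0 T) :=
    continuousOn_const.add (hc_comp (fun _ => xT) continuous_const)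
  have hℓbd : ∀ s ∈ Icc (0:ℝ) T, |ℓ s| ≤ C₃ + C_F := by
    intro s hs
    have h1 := hcbd s hs xT
    have h2 := hL0bd xT
    calc |ℓ s| ≤ |L xT 0| + |c s xT| := abs_add_le _ _
      _ ≤ C₃ + C_F := by linarith
  -- the escape set
  set E : Set ℝ := (ξ ⁻¹' K₀)ᶜ with hE
  have hEm : MeasurableSet E := ((hK₀c.isClosed.preimage hcξ).measurableSet).compl
  -- the integrands
  set f : ℝ → ℝ := fun s => L (ξ s) (deriv ξ s) + c s (ξ s) with hf
  set q : ℝ → ℝ := fun s => (1/(2*C₁)) * ‖deriv ξ s‖^2 with hqdef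
  set g : ℝ → ℝ := fun s => ℓ s + (q s + δ₀ * E.indicator (fun _ => (1:ℝ)) s) with hgdef
  -- measurability and bounds along ξ
  have hd_meas : Measurable (deriv ξ) := measurable_deriv ξ
  have hdb : ∀ s, ‖deriv ξ s‖ ≤ K := fun s => my_norm_deriv_le hK s
  have hLmeas : Measurable (fun s => L (ξ s) (deriv ξ s)) := by
    have h1 : Measurable (fun s => ((ξ s, deriv ξ s) : Euc n × Euc n)) :=
      (hcξ.measurable).prodMk hd_meas
    exact (hTc.continuous.measurable).comp h1
  have hSc : IsCompact ((ξ '' Icc 0 T) ×ˢ closedBall (0 : Euc n) K) :=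
    ((isCompact_Icc).image hcξ).prod (isCompact_closedBall _ _)
  obtain ⟨CL, hCL⟩ := hSc.exists_bound_of_continuousOn (hTc.continuous.continuousOn)
  have hLbd : ∀ s ∈ Icc (0:ℝ) T, |L (ξ s) (deriv ξ s)| ≤ CL := by
    intro s hs
    have h1 : ((ξ s, deriv ξ s) : Euc n × Euc n) ∈ (ξ '' Icc 0 T) ×ˢ closedBall (0 : Euc n) K :=
      ⟨mem_image_of_mem _ hs, mem_closedBall_zero_iff.2 (hdb s)⟩
    have := hCL _ h1
    simpa [Real.norm_eq_abs] using this
  -- integrability helper for bounded measurable functions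
  have hIIbdd : ∀ (F : ℝ → ℝ) (C : ℝ) (u w : ℝ), u ≤ w → Icc u w ⊆ Icc 0 T → Measurable F →
      (∀ s ∈ Icc (0:ℝ) T, |F s| ≤ C) → IntervalIntegrable F volume u w := by
    intro F C u w huw hsub hFm hFb
    rw [intervalIntegrable_iff, uIoc_of_le huw]
    constructor
    · exact (hFm.aestronglyMeasurable).restrict
    · apply HasFiniteIntegral.of_bounded (C := C)
      refine (ae_restrict_iff' measurableSet_Ioc).2 (Eventually.of_forall fun s hs => ?_)
      rw [Real.norm_eq_abs]
      exact hFb s (hsub (Ioc_subset_Icc_self hs))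
  -- integrability of the various pieces
  have hfint : IntervalIntegrable f volume 0 T := by
    apply IntervalIntegrable.add
    · exact hIIbdd _ CL 0 T hT0 subset_rfl hLmeas hLbd
    · apply ContinuousOn.intervalIntegrable
      rw [uIcc_of_le hT0]
      exact hc_comp ξ hcξ
  have hℓint : ∀ u w : ℝ, 0 ≤ u → w ≤ T → u ≤ w → IntervalIntegrable ℓ volume u w := by
    intro u w hu hw huw
    apply ContinuousOn.intervalIntegrable
    rw [uIcc_of_le huw]
    exact hℓcont.mono (fun s hs => ⟨le_trans hu hs.1, le_trans hs.2 hw⟩)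
  have hqint : ∀ u w : ℝ, u ≤ w → Icc u w ⊆ Icc 0 T → IntervalIntegrable q volume u w := by
    intro u w huw hsub
    apply hIIbdd _ ((1/(2*C₁)) * K^2) u w huw hsub
    · exact measurable_const.mul ((hd_meas.norm).pow_const 2)
    · intro s _
      rw [hqdef]
      have h1 : ‖deriv ξ s‖^2 ≤ (K:ℝ)^2 := by
        have := hdb s
        nlinarith [norm_nonneg (deriv ξ s)]
      have h2 : (0:ℝ) ≤ (1/(2*C₁)) := by positivity
      rw [abs_of_nonneg (by positivity)]
      exact mul_le_mul_of_nonneg_left h1 h2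
  have hindint : IntervalIntegrable (fun s => δ₀ * E.indicator (fun _ => (1:ℝ)) s) volume 0 T := by
    apply hIIbdd _ δ₀ 0 T hT0 subset_rfl
    · exact measurable_const.mul (measurable_const.indicator hEm)
    · intro s _
      by_cases hsE : s ∈ E
      · rw [indicator_of_mem hsE, mul_one, abs_of_pos hδ₀]
      · rw [indicator_of_notMem hsE, mul_zero, abs_zero]
        exact hδ₀.le
  have hgint : IntervalIntegrable g volume 0 T :=
    (hℓint 0 T le_rfl le_rfl hT0).add ((hqint 0 T hT0 subset_rfl).add hindint)
  -- the pointwise lower bound f ≥ g on [0, T]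
  have hfg : ∀ s ∈ Icc (0:ℝ) T, g s ≤ f s := by
    intro s hs
    have h1 := (htay (ξ s) (deriv ξ s)).1
    by_cases hsK : ξ s ∈ K₀
    · have h2 := hwellall s hs (ξ s)
      have h3 : E.indicator (fun _ => (1:ℝ)) s = 0 :=
        indicator_of_notMem (by simp [hE, hsK]) _
      simp only [hgdef, hf, hqdef, h3, mul_zero, add_zero, hℓdef]
      linarith
    · have h2 := (hwells s hs).2 (ξ s) hsK
      have h3 : E.indicator (fun _ => (1:ℝ)) s = 1 :=
        indicator_of_mem (by simp [hE, hsK]) _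
      simp only [hgdef, hf, hqdef, h3, mul_one, hℓdef]
      linarith
  have hIfg : ∫ s in (0:ℝ)..T, g s ≤ ∫ s in (0:ℝ)..T, f s :=
    intervalIntegral.integral_mono_on hT0 hgint hfint hfg
  -- decomposition of ∫ g
  set mE : ℝ := (volume (Ioc (0:ℝ) T ∩ E)).toReal with hmE
  have hIg : ∫ s in (0:ℝ)..T, g s
      = (∫ s in (0:ℝ)..T, ℓ s) + ((∫ s in (0:ℝ)..T, q s) + δ₀ * mE) := by
    rw [hgdef]
    rw [intervalIntegral.integral_add (hℓint 0 T le_rfl le_rfl hT0)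
      ((hqint 0 T hT0 subset_rfl).add hindint),
      intervalIntegral.integral_add (hqint 0 T hT0 subset_rfl) hindint]
    congr 1
    congr 1
    rw [intervalIntegral.integral_const_mul]
    congr 1
    rw [intervalIntegral.integral_of_le hT0, setIntegral_indicator hEm]
    simp [hmE, measureReal_def]
  -- the competitor curve
  set w : Euc n := xT - x with hwdef
  have hwbd : ‖w‖ ≤ 2 * R₀ := by
    have h1 : ‖xT‖ ≤ R₀ := mem_closedBall_zero_iff.1 (hK₀R₀ hxTK)
    have h2 : ‖x‖ ≤ R₀ := mem_closedBall_zero_iff.1 (hK₀R₀ hx)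
    calc ‖w‖ ≤ ‖xT‖ + ‖x‖ := norm_sub_le _ _
      _ ≤ 2 * R₀ := by linarith
  set η : ℝ → Euc n := fun s => x + (max 0 (min s 1)) • w with hηdef
  have hclamp : LipschitzWith 1 (fun s : ℝ => max 0 (min s 1)) :=
    (LipschitzWith.id.min_const 1).const_max 0
  have hηlip : LipschitzWith ‖w‖₊ η := by
    apply LipschitzWith.of_dist_le_mul
    intro s u
    have h1 := hclamp.dist_le_mul s u
    rw [NNReal.coe_one, one_mul] at h1
    rw [hηdef]
    simp only [dist_add_left]
    rw [dist_eq_norm, ← sub_smul, norm_smul, Real.norm_eq_abs]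
    calc |max 0 (min s 1) - max 0 (min u 1)| * ‖w‖ ≤ dist s u * ‖w‖ := by
          apply mul_le_mul_of_nonneg_right _ (norm_nonneg w)
          rw [← Real.dist_eq]; exact h1
      _ = ‖w‖₊ * dist s u := by rw [coe_nnnorm, mul_comm]
  have hη0 : η 0 = x := by
    rw [hηdef]
    norm_num
  have hηcont : Continuous η := hηlip.continuous
  have hηconst : ∀ s : ℝ, 1 ≤ s → η s = x + w := by
    intro s hs
    rw [hηdef]
    simp only [min_eq_right hs, max_eq_right zero_le_one, one_smul]
  have hηT : η T = xT := by
    rw [hηconst T hT.le, hwdef]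
    abel
  have hcomp : action L c uf 0 T ξ ≤ action L c uf 0 T η :=
    hminle η ⟨‖w‖₊, hηlip⟩ hη0
  -- derivative of the competitor
  have hηd1 : ∀ s ∈ Ioo (0:ℝ) 1, deriv η s = w := by
    intro s hs
    have hev : η =ᶠ[𝓝 s] (fun u => x + u • w) := by
      filter_upwards [Ioo_mem_nhds hs.1 hs.2] with u hu
      rw [hηdef]
      simp only [min_eq_left hu.2.le, max_eq_right hu.1.le]
    rw [hev.deriv_eq]
    have hd : HasDerivAt (fun u : ℝ => x + u • w) w s := by
      simpa using ((hasDerivAt_id s).smul_const w).const_add x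
    exact hd.deriv
  have hηd2 : ∀ s ∈ Ioi (1:ℝ), deriv η s = 0 := by
    intro s hs
    have hev : η =ᶠ[𝓝 s] (fun _ => x + w) := by
      filter_upwards [Ioi_mem_nhds hs] with u hu
      exact hηconst u hu.le
    rw [hev.deriv_eq, deriv_const]
  -- the competitor integrand
  set fη : ℝ → ℝ := fun s => L (η s) (deriv η s) + c s (η s) with hfηdef
  set g₁ : ℝ → ℝ := fun s => L (η s) w + c s (η s) with hg₁def
  have hg₁cont : ContinuousOn g₁ (Icc 0 1) := by
    apply ContinuousOn.add
    · exact (hTc.continuous.comp (hηcont.prodMk continuous_const)).continuousOn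
    · exact (hc_comp η hηcont).mono (fun s hs => ⟨hs.1, le_trans hs.2 hT.le⟩)
  have hg₁int : IntervalIntegrable g₁ volume 0 1 := by
    apply ContinuousOn.intervalIntegrable
    rwa [uIcc_of_le zero_le_one]
  have hae1 : ∀ᵐ s ∂(volume : Measure ℝ), s ∈ Ι (0:ℝ) 1 → fη s = g₁ s := by
    have h1 : (volume : Measure ℝ) {(1:ℝ)} = 0 := Real.volume_singleton
    filter_upwards [compl_mem_ae_iff.2 h1] with s hs1 hs
    rw [uIoc_of_le zero_le_one] at hs
    have hs' : s ∈ Ioo (0:ℝ) 1 := ⟨hs.1, lt_of_le_of_ne hs.2 (by simpa using hs1)⟩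
    simp only [hfηdef, hg₁def, hηd1 s hs']
  have hfηint1 : IntervalIntegrable fη volume 0 1 := by
    rw [intervalIntegrable_iff]
    have h1 : IntegrableOn g₁ (Ι (0:ℝ) 1) volume := by
      rw [← intervalIntegrable_iff]; exact hg₁int
    apply h1.congr_fun_ae
    rw [Filter.EventuallyEq, ae_restrict_iff' measurableSet_uIoc]
    filter_upwards [hae1] with s hss hsi
    exact (hss hsi).symm
  have hIη1 : ∫ s in (0:ℝ)..1, fη s = ∫ s in (0:ℝ)..1, g₁ s :=
    intervalIntegral.integral_congr_ae hae1
  have hB₁ : ∫ s in (0:ℝ)..1, g₁ s ≤ C₃ + 2*C₁*R₀^2 + C_F := by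
    have hb : ∀ s ∈ Icc (0:ℝ) 1, g₁ s ≤ C₃ + 2*C₁*R₀^2 + C_F := by
      intro s hs
      have h1 := (htay (η s) w).2
      have h2 := hL0bd (η s)
      have h3 := hcbd s ⟨hs.1, le_trans hs.2 hT.le⟩ (η s)
      have h4 : (C₁/2) * ‖w‖^2 ≤ (C₁/2) * (2*R₀)^2 := by
        apply mul_le_mul_of_nonneg_left _ (by positivity)
        nlinarith [norm_nonneg w]
      have h5 : |L (η s) 0| ≤ C₃ := hL0bd (η s)
      simp only [hg₁def]
      have h6 : (C₁/2) * (2*R₀)^2 = 2*C₁*R₀^2 := by ring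
      have h7 : L (η s) 0 ≤ C₃ := (abs_le.1 h5).2
      have h8 : c s (η s) ≤ C_F := (abs_le.1 h3).2
      linarith
    have := intervalIntegral.integral_mono_on zero_le_one hg₁int
      intervalIntegrable_const hb
    simpa using this
  have heq2 : ∀ s ∈ Ι (1:ℝ) T, fη s = ℓ s := by
    intro s hs
    rw [uIoc_of_le hT.le] at hs
    have h1 : deriv η s = 0 := hηd2 s hs.1
    have h2 : η s = xT := by rw [hηconst s hs.1.le, hwdef]; abel
    simp only [hfηdef, hℓdef, h1, h2]
  have hfηint2 : IntervalIntegrable fη volume 1 T := by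
    rw [intervalIntegrable_iff]
    have h1 : IntegrableOn ℓ (Ι (1:ℝ) T) volume := by
      rw [← intervalIntegrable_iff]
      exact hℓint 1 T zero_le_one le_rfl hT.le
    apply h1.congr_fun_ae
    rw [Filter.EventuallyEq, ae_restrict_iff' measurableSet_uIoc]
    refine Eventually.of_forall (fun s hsi => (heq2 s hsi).symm)
  have hIη2 : ∫ s in (1:ℝ)..T, fη s = ∫ s in (1:ℝ)..T, ℓ s :=
    intervalIntegral.integral_congr_ae (Eventually.of_forall heq2)
  have hsplitη : ∫ s in (0:ℝ)..T, fη s = (∫ s in (0:ℝ)..1, fη s) + ∫ s in (1:ℝ)..T, fη s :=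
    (integral_add_adjacent_intervals hfηint1 hfηint2).symm
  have hsplitℓ : ∫ s in (0:ℝ)..T, ℓ s = (∫ s in (0:ℝ)..1, ℓ s) + ∫ s in (1:ℝ)..T, ℓ s :=
    (integral_add_adjacent_intervals (hℓint 0 1 le_rfl hT.le zero_le_one)
      (hℓint 1 T zero_le_one le_rfl hT.le)).symm
  have hℓ1low : -(C₃ + C_F) ≤ ∫ s in (0:ℝ)..1, ℓ s := by
    have hb : ∀ s ∈ Icc (0:ℝ) 1, -(C₃ + C_F) ≤ ℓ s := by
      intro s hs
      have := hℓbd s ⟨hs.1, le_trans hs.2 hT.le⟩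
      linarith [(abs_le.1 this).1]
    have := intervalIntegral.integral_mono_on zero_le_one intervalIntegrable_const
      (hℓint 0 1 le_rfl hT.le zero_le_one) hb
    simpa using this
  have hufxT : uf xT ≤ uf y₀ + 2 * (Kf:ℝ) * R₀ := by
    have h1 := huf.dist_le_mul xT y₀
    have h2 : dist xT y₀ ≤ 2 * R₀ := by
      rw [dist_eq_norm]
      have ha : ‖xT‖ ≤ R₀ := mem_closedBall_zero_iff.1 (hK₀R₀ hxTK)
      have hb : ‖y₀‖ ≤ R₀ := mem_closedBall_zero_iff.1 (hK₀R₀ hy₀)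
      calc ‖xT - y₀‖ ≤ ‖xT‖ + ‖y₀‖ := norm_sub_le _ _
        _ ≤ 2 * R₀ := by linarith
    have h3 : uf xT - uf y₀ ≤ dist (uf xT) (uf y₀) := by
      rw [Real.dist_eq]; exact le_abs_self _
    nlinarith [Kf.coe_nonneg]
  -- assemble the energy estimate
  have hQnn : 0 ≤ ∫ s in (0:ℝ)..T, q s := by
    apply intervalIntegral.integral_nonneg hT0
    intro u _
    rw [hqdef]
    positivity
  have hmEnn : 0 ≤ mE := ENNReal.toReal_nonneg
  have hmain : (∫ s in (0:ℝ)..T, q s) + δ₀ * mE ≤ A := by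
    have h1 : (∫ s in (0:ℝ)..T, f s) + uf (ξ T) ≤ (∫ s in (0:ℝ)..T, fη s) + uf (η T) := by
      simpa only [action] using hcomp
    rw [hηT, hsplitη, hIη1, hIη2] at h1
    have h2 := hufge (ξ T)
    rw [hIg] at hIfg
    rw [hsplitℓ] at hIfg
    have := hB₁
    rw [hA]
    linarith
  have hQA : ∫ s in (0:ℝ)..T, q s ≤ A := by nlinarith
  have hmEA : mE ≤ A / δ₀ := by
    rw [le_div_iff₀ hδ₀]
    nlinarith
  -- the last visit to K₀ before time t
  set S : Set ℝ := Icc 0 t ∩ ξ ⁻¹' K₀ with hSdef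
  have hS0 : (0:ℝ) ∈ S := ⟨⟨le_refl 0, ht.1⟩, by rw [mem_preimage, hξ0]; exact hx⟩
  have hSbdd : BddAbove S := bddAbove_Icc.mono inter_subset_left
  have hScl : IsClosed S := isClosed_Icc.inter (hK₀c.isClosed.preimage hcξ)
  set σ : ℝ := sSup S with hσdef
  have hσS : σ ∈ S := hScl.csSup_mem ⟨0, hS0⟩ hSbdd
  have hσt : σ ≤ t := hσS.1.2
  have hσ0 : 0 ≤ σ := hσS.1.1
  have hξσ : ξ σ ∈ K₀ := hσS.2
  have hseg : Ioc σ t ⊆ Ioc 0 T ∩ E := by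
    intro s hs
    refine ⟨⟨lt_of_le_of_lt hσ0 hs.1, le_trans hs.2 ht.2⟩, ?_⟩
    by_contra hcon
    have hsS : s ∈ S := ⟨⟨le_of_lt (lt_of_le_of_lt hσ0 hs.1), le_trans hs.2 le_rfl⟩,
      by simpa [hE] using hcon⟩
    have := le_csSup hSbdd hsS
    rw [← hσdef] at this
    linarith [hs.1]
  have htσ : t - σ ≤ A / δ₀ := by
    have h1 : volume (Ioc σ t) ≤ volume (Ioc (0:ℝ) T ∩ E) := measure_mono hseg
    have h2 : volume (Ioc (0:ℝ) T ∩ E) ≤ volume (Ioc (0:ℝ) T) := measure_mono inter_subset_left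
    have h3 : volume (Ioc (0:ℝ) T) < ⊤ := measure_Ioc_lt_top
    have h4 := ENNReal.toReal_mono (ne_of_lt (lt_of_le_of_lt h2 h3)) h1
    rw [Real.volume_Ioc, ENNReal.toReal_ofReal (by linarith : (0:ℝ) ≤ t - σ)] at h4
    calc t - σ ≤ mE := h4
      _ ≤ A / δ₀ := hmEA
  -- final estimate
  have hIccsub : Icc σ t ⊆ Icc 0 T := fun s hs => ⟨le_trans hσ0 hs.1, le_trans hs.2 ht.2⟩
  have hndint : IntervalIntegrable (fun s => ‖deriv ξ s‖) volume σ t :=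
    hIIbdd _ K σ t hσt hIccsub hd_meas.norm (fun s _ => by rw [abs_of_nonneg (norm_nonneg _)]; exact hdb s)
  have hn2int : ∀ u w : ℝ, u ≤ w → Icc u w ⊆ Icc 0 T →
      IntervalIntegrable (fun s => ‖deriv ξ s‖^2) volume u w := by
    intro u w huw hsub
    apply hIIbdd _ ((K:ℝ)^2) u w huw hsub ((hd_meas.norm).pow_const 2)
    intro s _
    rw [abs_of_nonneg (by positivity)]
    nlinarith [hdb s, norm_nonneg (deriv ξ s)]
  have hn2mono : ∫ s in σ..t, ‖deriv ξ s‖^2 ≤ ∫ s in (0:ℝ)..T, ‖deriv ξ s‖^2 := by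
    rw [intervalIntegral.integral_of_le hσt, intervalIntegral.integral_of_le hT0]
    apply setIntegral_mono_set
    · rw [← intervalIntegrable_iff_integrableOn_Ioc_of_le hT0]
      exact hn2int 0 T hT0 subset_rfl
    · exact Eventually.of_forall (fun s => by positivity)
    · exact HasSubset.Subset.eventuallyLE (fun s hs => ⟨lt_of_le_of_lt hσ0 hs.1, le_trans hs.2 ht.2⟩)
  have hq2 : ∫ s in (0:ℝ)..T, ‖deriv ξ s‖^2 ≤ 2 * C₁ * A := by
    have h1 : ∫ s in (0:ℝ)..T, q s = (1/(2*C₁)) * ∫ s in (0:ℝ)..T, ‖deriv ξ s‖^2 := by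
      rw [hqdef, intervalIntegral.integral_const_mul]
    have h2 : (0:ℝ) < 1/(2*C₁) := by positivity
    rw [h1] at hQA
    calc ∫ s in (0:ℝ)..T, ‖deriv ξ s‖^2
        = (2*C₁) * ((1/(2*C₁)) * ∫ s in (0:ℝ)..T, ‖deriv ξ s‖^2) := by
          field_simp
      _ ≤ (2*C₁) * A := by
          apply mul_le_mul_of_nonneg_left hQA (by positivity)
      _ = 2 * C₁ * A := by ring
  have hftc : ‖ξ t - ξ σ‖ ≤ ∫ s in σ..t, ‖deriv ξ s‖ := my_lip_ftc_le hK hσt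
  have hnormint : ∫ s in σ..t, ‖deriv ξ s‖ ≤ (t - σ)/2 + C₁ * A := by
    have hb : ∀ s ∈ Icc σ t, ‖deriv ξ s‖ ≤ 1/2 + ‖deriv ξ s‖^2/2 := by
      intro s _
      nlinarith [sq_nonneg (‖deriv ξ s‖ - 1)]
    have h1 : ∫ s in σ..t, ‖deriv ξ s‖ ≤ ∫ s in σ..t, (1/2 + ‖deriv ξ s‖^2/2) := by
      apply intervalIntegral.integral_mono_on hσt hndint _ hb
      exact intervalIntegrable_const.add ((hn2int σ t hσt hIccsub).div_const 2)
    have h2 : ∫ s in σ..t, (1/2 + ‖deriv ξ s‖^2/2)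
        = (t - σ) * (1/2) + (∫ s in σ..t, ‖deriv ξ s‖^2) / 2 := by
      rw [intervalIntegral.integral_add intervalIntegrable_const
        ((hn2int σ t hσt hIccsub).div_const 2)]
      rw [intervalIntegral.integral_const, intervalIntegral.integral_div]
      simp [smul_eq_mul]
    rw [h2] at h1
    have h4 : (∫ s in σ..t, ‖deriv ξ s‖^2) ≤ 2 * C₁ * A := le_trans hn2mono hq2
    calc ∫ s in σ..t, ‖deriv ξ s‖ ≤ (t - σ) * (1/2) + (∫ s in σ..t, ‖deriv ξ s‖^2) / 2 := h1
      _ ≤ (t - σ) * (1/2) + (2 * C₁ * A) / 2 :=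
          add_le_add_right ((div_le_div_iff_of_pos_right (by norm_num : (0:ℝ) < 2)).2 h4) _

      _ = (t - σ)/2 + C₁ * A := by ring
  have hξσR : ‖ξ σ‖ ≤ R₀ := mem_closedBall_zero_iff.1 (hK₀R₀ hξσ)
  have hfin : ‖ξ t‖ ≤ ‖ξ σ‖ + ‖ξ t - ξ σ‖ := by
    calc ‖ξ t‖ = ‖ξ σ + (ξ t - ξ σ)‖ := by rw [add_sub_cancel]
      _ ≤ ‖ξ σ‖ + ‖ξ t - ξ σ‖ := norm_add_le _ _
  have hdiveq : (A / δ₀) / 2 = A / (2 * δ₀) := by ring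
  have h5 : (t - σ)/2 ≤ (A / δ₀)/2 := by linarith
  calc ‖ξ t‖ ≤ ‖ξ σ‖ + ‖ξ t - ξ σ‖ := hfin
    _ ≤ R₀ + ((t - σ)/2 + C₁ * A) := by linarith [hftc, hnormint]
    _ ≤ R₀ + C₁ * A + A / (2 * δ₀) := by
        rw [← hdiveq]
        linarith


/-- attainable set from `K₀`: in the time-dependent variational setting,
there is `R₁ > 0`, independent of the horizon `T > 1` and of the coupling `c` (with
`|c| ≤ C_F` and satisfying the uniform well condition), such that for every Borel
probability measure `m₀` supported in `K₀` and every optimal flow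
`φ` (i.e. `s ↦ φ s x` is a minimizer from `(0,x)` for each `x ∈ K₀`, and `φ t` is Borel
measurable for each `t ∈ [0,T]`), the pushforward `φ(t,·)♯m₀` is supported in the closed
ball `B̄_{R₁}` for every `t ∈ [0,T]`. -/
theorem stmt14 (n : ℕ) (hn : 1 ≤ n) (L : Euc n → Euc n → ℝ) (C₁ C₂ C₃ : ℝ)
    (hC₁ : 0 < C₁) (hC₂ : 0 < C₂) (hC₃ : 0 < C₃)
    (hTon : IsStrictTonelli L C₁ C₂ C₃)
    (hRev : ∀ x v : Euc n, L x v = L x (-v))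
    (C_F : ℝ) (hCF : 0 ≤ C_F)
    (K₀ : Set (Euc n)) (hK₀c : IsCompact K₀) (hK₀ne : K₀.Nonempty)
    (R₀ : ℝ) (hR₀ : 0 < R₀) (hK₀R₀ : K₀ ⊆ closedBall 0 R₀)
    (δ₀ : ℝ) (hδ₀ : 0 < δ₀)
    (uf : Euc n → ℝ) (Kf : ℝ≥0) (huf : LipschitzWith Kf uf)
    (c₀ : ℝ) (hc₀ : 0 ≤ c₀) (hufge : ∀ x, -c₀ ≤ uf x) :
    ∃ R₁ > (0 : ℝ), ∀ T : ℝ, 1 < T → ∀ c : ℝ → Euc n → ℝ,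
      ContinuousOn (fun p : ℝ × Euc n => c p.1 p.2) (Set.Icc 0 T ×ˢ Set.univ) →
      (∀ s ∈ Set.Icc (0 : ℝ) T, ∀ x, |c s x| ≤ C_F) →
      (∃ xT : Euc n, WellCondition L c K₀ δ₀ T xT) →
      ∀ m₀ : Measure (Euc n), IsProbabilityMeasure m₀ → m₀ K₀ᶜ = 0 →
      ∀ φ : ℝ → Euc n → Euc n,
        (∀ x ∈ K₀, IsMinimizer L c uf 0 T x (fun s => φ s x)) →
        (∀ t ∈ Set.Icc (0 : ℝ) T, Measurable (φ t)) →
        ∀ t ∈ Set.Icc (0 : ℝ) T,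
          Measure.map (φ t) m₀ (closedBall (0 : Euc n) R₁)ᶜ = 0 := by
  obtain ⟨y₀, hy₀⟩ := hK₀ne
  refine ⟨max (R₀ + C₁ * (2*C₃ + 2*C₁*R₀^2 + 2*C_F + uf y₀ + 2*(Kf:ℝ)*R₀ + c₀)
      + (2*C₃ + 2*C₁*R₀^2 + 2*C_F + uf y₀ + 2*(Kf:ℝ)*R₀ + c₀) / (2*δ₀)) R₀,
    lt_of_lt_of_le hR₀ (le_max_right _ _), ?_⟩
  intro T hT c hccont hcbd hex m₀ hm₀ hm₀K φ hφmin hφmeas t ht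
  obtain ⟨xT, hwell⟩ := hex
  rw [Measure.map_apply (hφmeas t ht) measurableSet_closedBall.compl]
  apply measure_mono_null _ hm₀K
  intro x hxmem
  simp only [Set.mem_preimage, Set.mem_compl_iff] at hxmem ⊢
  intro hxK
  apply hxmem
  rw [mem_closedBall_zero_iff]
  refine le_trans ?_ (le_max_left _ _)
  exact my_key_bound L C₁ C₂ C₃ hC₁ hC₃ hTon hRev C_F K₀ hK₀c R₀ hK₀R₀ δ₀ hδ₀ uf Kf huf
    c₀ hufge y₀ hy₀ T hT c hccont hcbd xT hwell x hxK (fun s => φ s x) (hφmin x hxK) t ht
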